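/- (One-step inequality for a stochastic gradient.) Let f : E → ℝ be differentiable with L-Lipschitz gradient (L > 0). Let λ_k ∈ S, g ∈ E, β > 0, c > 0, and let λ₊ ∈ S minimize λ ↦ ⟨λ, g⟩ + h(λ) + (1/β)·D(λ, λ_k) over S. Assume h is convex on S and differentiable at λ₊, the map λ ↦ D(λ, λ_k) is differentiable at λ₊, and α > 0 satisfies ⟨λ₊ − λ_k, ∇₁D(λ₊, λ_k)⟩ ≥ α·‖λ₊ − λ_k‖². Then, with G := (λ_k − λ₊)/β and δ := g − ∇f(λ_k), one has f(λ₊) + h(λ₊) ≤ f(λ_k) + h(λ_k) − ((α − 1/(2c))·β − (L/2)·β²)·‖G‖² + (c·β/2)·‖δ‖². -/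

import Mathlib

open scoped RealInnerProductSpace

lemma grad_bridge {E : Type*} [NormedAddCommGroup E] [InnerProductSpace ℝ E] [CompleteSpace E]
    (f : E → ℝ) (x v : E) : (fderiv ℝ f x) v = ⟪gradient f x, v⟫ := by
  rw [gradient, ← InnerProductSpace.toDual_apply_apply,
    LinearIsometryEquiv.apply_symm_apply]

lemma descent_lemma {E : Type*} [NormedAddCommGroup E] [InnerProductSpace ℝ E] [CompleteSpace E]
    (f : E → ℝ) (L : ℝ) (hL : 0 ≤ L) (hf : Differentiable ℝ f)
    (hlip : ∀ x y : E, ‖gradient f x - gradient f y‖ ≤ L * ‖x - y‖) (x y : E) :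
    f y ≤ f x + ⟪gradient f x, y - x⟫ + L / 2 * ‖y - x‖ ^ 2 := by
  set u := y - x with hu
  set G : ℝ → ℝ := fun t => f (x + t • u) - t * ⟪gradient f x, u⟫ - L / 2 * t ^ 2 * ‖u‖ ^ 2
    with hG
  have hc : ∀ t : ℝ, HasDerivAt (fun t : ℝ => x + t • u) u t := fun t => by
    simpa using ((hasDerivAt_id t).smul_const u).const_add x
  have hder : ∀ t : ℝ, HasDerivAt G
      (⟪gradient f (x + t • u), u⟫ - ⟪gradient f x, u⟫ - L / 2 * (2 * t) * ‖u‖ ^ 2) t := by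
    intro t
    have h1 : HasDerivAt (fun t : ℝ => f (x + t • u)) ((fderiv ℝ f (x + t • u)) u) t :=
      (hf (x + t • u)).hasFDerivAt.comp_hasDerivAt t (hc t)
    rw [grad_bridge] at h1
    have h2 : HasDerivAt (fun t : ℝ => t * ⟪gradient f x, u⟫) ⟪gradient f x, u⟫ t := by
      simpa using (hasDerivAt_id t).mul_const ⟪gradient f x, u⟫
    have h3 : HasDerivAt (fun t : ℝ => L / 2 * t ^ 2 * ‖u‖ ^ 2)
        (L / 2 * (2 * t) * ‖u‖ ^ 2) t := by
      have := ((hasDerivAt_pow 2 t).const_mul (L / 2)).mul_const (‖u‖ ^ 2)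
      simpa [mul_comm, mul_assoc, mul_left_comm] using this
    exact (h1.sub h2).sub h3
  have hanti : AntitoneOn G (Set.Icc (0:ℝ) 1) := by
    apply antitoneOn_of_deriv_nonpos (convex_Icc 0 1)
    · exact Continuous.continuousOn (by
        have : Continuous G := by
          apply Continuous.sub
          apply Continuous.sub
          · exact hf.continuous.comp (by continuity)
          · continuity
          · continuity
        exact this)
    · intro t ht
      exact ((hder t).differentiableAt).differentiableWithinAt
    · intro t ht
      rw [interior_Icc] at ht
      rw [(hder t).deriv]
      have key : ⟪gradient f (x + t • u) - gradient f x, u⟫ ≤ L * t * ‖u‖ ^ 2 := by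
        calc ⟪gradient f (x + t • u) - gradient f x, u⟫
            ≤ ‖gradient f (x + t • u) - gradient f x‖ * ‖u‖ := real_inner_le_norm _ _
          _ ≤ (L * ‖(x + t • u) - x‖) * ‖u‖ := by
              have := hlip (x + t • u) x
              nlinarith [norm_nonneg u]
          _ = L * t * ‖u‖ ^ 2 := by
              rw [add_sub_cancel_left, norm_smul, Real.norm_eq_abs,
                abs_of_pos ht.1]; ring
      rw [inner_sub_left] at key
      nlinarith
  have h01 := hanti (Set.left_mem_Icc.2 zero_le_one) (Set.right_mem_Icc.2 zero_le_one)
    zero_le_one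
  simp only [hG, zero_smul, add_zero, one_smul, zero_pow, one_pow] at h01
  have hxy : x + u = y := by rw [hu]; abel
  rw [hxy] at h01
  nlinarith [h01]

/-- One-step inequality for a stochastic (inexact) gradient `g`: with
`G := (λ_k − λ₊)/β` and gradient error `δ := g − ∇f(λ_k)`,
`f(λ₊) + h(λ₊) ≤ f(λ_k) + h(λ_k) − ((α − 1/(2c))β − (L/2)β²)·‖G‖² + (cβ/2)·‖δ‖²`. -/
theorem stmt_4 {E : Type*} [NormedAddCommGroup E] [InnerProductSpace ℝ E] [CompleteSpace E]
    (S : Set E) (hS : Convex ℝ S)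
    (h : E → ℝ) (D : E → E → ℝ)
    (f : E → ℝ) (L : ℝ) (hL : 0 < L)
    (hf : Differentiable ℝ f)
    (hlip : ∀ x y : E, ‖gradient f x - gradient f y‖ ≤ L * ‖x - y‖)
    (lamk : E) (hlamkS : lamk ∈ S) (g : E) (β : ℝ) (hβ : 0 < β) (c : ℝ) (hc : 0 < c)
    (lamp : E) (hlampS : lamp ∈ S)
    (hmin : ∀ y ∈ S,
      ⟪lamp, g⟫ + h lamp + (1 / β) * D lamp lamk ≤
        ⟪y, g⟫ + h y + (1 / β) * D y lamk)
    (hconv : ConvexOn ℝ S h) (hdiff : DifferentiableAt ℝ h lamp)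
    (hDdiff : DifferentiableAt ℝ (fun x => D x lamk) lamp)
    (α : ℝ) (hα : 0 < α)
    (hA6 : ⟪lamp - lamk, gradient (fun x => D x lamk) lamp⟫ ≥ α * ‖lamp - lamk‖ ^ 2) :
    f lamp + h lamp ≤ f lamk + h lamk -
        ((α - 1 / (2 * c)) * β - (L / 2) * β ^ 2) * ‖(1 / β) • (lamk - lamp)‖ ^ 2 +
        (c * β / 2) * ‖g - gradient f lamk‖ ^ 2 := by
  set u := lamp - lamk with hu
  set δ := g - gradient f lamk with hδ
  -- first-order optimality
  have hφdiff : DifferentiableAt ℝ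
      (fun y => ⟪y, g⟫ + h y + (1 / β) * D y lamk) lamp := by
    have h1 : DifferentiableAt ℝ (fun y : E => ⟪y, g⟫) lamp := by
      have : (fun y : E => ⟪y, g⟫) = fun y : E => ⟪g, y⟫ := by
        funext y; exact real_inner_comm g y
      rw [this]
      exact (innerSL ℝ g).differentiableAt
    exact (h1.add hdiff).add (hDdiff.const_mul _)
  have hmin' : IsMinOn (fun y => ⟪y, g⟫ + h y + (1 / β) * D y lamk) S lamp :=
    isMinOn_iff.2 (fun y hy => hmin y hy)
  have hloc : IsLocalMinOn (fun y => ⟪y, g⟫ + h y + (1 / β) * D y lamk) S lamp :=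
    IsMinFilter.filter_mono hmin' inf_le_right
  have hcone : lamk - lamp ∈ posTangentConeAt S lamp :=
    sub_mem_posTangentConeAt_of_segment_subset (hS.segment_subset hlampS hlamkS)
  have hFO : 0 ≤ (fderiv ℝ (fun y => ⟪y, g⟫ + h y + (1 / β) * D y lamk) lamp)
      (lamk - lamp) :=
    hloc.hasFDerivWithinAt_nonneg hφdiff.hasFDerivAt.hasFDerivWithinAt hcone
  -- compute that fderiv
  have hfd : (fderiv ℝ (fun y => ⟪y, g⟫ + h y + (1 / β) * D y lamk) lamp) (lamk - lamp)
      = ⟪g, lamk - lamp⟫ + (fderiv ℝ h lamp) (lamk - lamp)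
        + (1 / β) * ((fderiv ℝ (fun x => D x lamk) lamp) (lamk - lamp)) := by
    have h1 : (fun y : E => ⟪y, g⟫) = fun y : E => (innerSL ℝ g) y := by
      funext y; exact real_inner_comm g y
    have hd1 : DifferentiableAt ℝ (fun y : E => ⟪y, g⟫) lamp := by
      rw [h1]; exact (innerSL ℝ g).differentiableAt
    rw [fderiv_fun_add (f := fun y => ⟪y, g⟫ + h y) (hd1.add hdiff) (hDdiff.const_mul _), fderiv_fun_add hd1 hdiff,
      fderiv_const_mul hDdiff]
    simp only [ContinuousLinearMap.add_apply, ContinuousLinearMap.coe_smul', Pi.smul_apply,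
      smul_eq_mul]
    have hfd1 : fderiv ℝ (fun y : E => ⟪y, g⟫) lamp = innerSL ℝ g := by
      rw [h1]; exact (innerSL ℝ g).fderiv
    rw [hfd1]
    rfl
  -- convexity inequality for h
  have hcvx : (fderiv ℝ h lamp) (lamk - lamp) ≤ h lamk - h lamp := by
    set v := lamk - lamp with hv
    have hψ : HasDerivAt (fun t : ℝ => h (lamp + t • v)) ((fderiv ℝ h lamp) v) 0 := by
      have hc : HasDerivAt (fun t : ℝ => lamp + t • v) v (0:ℝ) := by
        simpa using ((hasDerivAt_id (0:ℝ)).smul_const v).const_add lamp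
      have hd' : HasFDerivAt h (fderiv ℝ h lamp) (lamp + (0:ℝ) • v) := by
        simpa using hdiff.hasFDerivAt
      have := hd'.comp_hasDerivAt (0:ℝ) hc
      exact this
    have hslope : Filter.Tendsto (fun t : ℝ => (h (lamp + t • v) - h lamp) / t)
        (nhdsWithin 0 (Set.Ioi 0)) (nhds ((fderiv ℝ h lamp) v)) := by
      have := hasDerivAt_iff_tendsto_slope.1 hψ
      have h2 := this.mono_left (nhdsWithin_mono 0 (by
        intro t ht
        exact ne_of_gt ht : Set.Ioi (0:ℝ) ⊆ {0}ᶜ))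
      refine h2.congr' ?_
      filter_upwards [self_mem_nhdsWithin] with t ht
      simp [slope_def_field]
    refine le_of_tendsto hslope ?_
    filter_upwards [Ioo_mem_nhdsGT_of_mem (Set.mem_Ico.2 ⟨le_refl (0:ℝ), zero_lt_one⟩)]
      with t ht
    have hcomb := hconv.2 hlampS hlamkS (by linarith [ht.2] : (0:ℝ) ≤ 1 - t)
      (le_of_lt ht.1) (by ring)
    have heq : (1 - t) • lamp + t • lamk = lamp + t • v := by
      rw [hv]; module
    rw [heq] at hcomb
    simp only [smul_eq_mul] at hcomb
    rw [div_le_iff₀ ht.1]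
    nlinarith [hcomb]
  -- Bregman-type bound
  have hDgrad : (fderiv ℝ (fun x => D x lamk) lamp) (lamk - lamp) ≤ -(α * ‖u‖ ^ 2) := by
    rw [grad_bridge, real_inner_comm,
      show lamk - lamp = -u from by rw [hu]; abel, inner_neg_left]
    linarith [hA6]
  -- combine optimality
  have hopt : h lamp - h lamk + ⟪g, u⟫ ≤ -(α / β * ‖u‖ ^ 2) := by
    have hg : ⟪g, lamk - lamp⟫ = -⟪g, u⟫ := by
      rw [← inner_neg_right]; congr 1; rw [hu]; abel
    rw [hfd, hg] at hFO
    have hβ' : 0 < 1 / β := by positivity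
    have hr : 1 / β * (-(α * ‖u‖ ^ 2)) = -(α / β * ‖u‖ ^ 2) := by ring
    nlinarith [hFO, hcvx, hDgrad, mul_le_mul_of_nonneg_left hDgrad (le_of_lt hβ'), hr]
  -- descent
  have hdesc : f lamp ≤ f lamk + ⟪gradient f lamk, u⟫ + L / 2 * ‖u‖ ^ 2 :=
    descent_lemma f L (le_of_lt hL) hf hlip lamk lamp
  -- relate inner products
  have hgu : ⟪gradient f lamk, u⟫ = ⟪g, u⟫ - ⟪δ, u⟫ := by
    rw [hδ, inner_sub_left]; ring
  -- Young
  have hyoung : -⟪δ, u⟫ ≤ c * β / 2 * ‖δ‖ ^ 2 + 1 / (2 * c * β) * ‖u‖ ^ 2 := by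
    have h1 : -⟪δ, u⟫ ≤ ‖δ‖ * ‖u‖ := by
      have := real_inner_le_norm (-δ) u
      simpa [inner_neg_left] using this
    have h2 : ‖δ‖ * ‖u‖ ≤ c * β / 2 * ‖δ‖ ^ 2 + 1 / (2 * c * β) * ‖u‖ ^ 2 := by
      have h2cβ : (0:ℝ) < 2 * c * β := by positivity
      rw [show c * β / 2 * ‖δ‖ ^ 2 + 1 / (2 * c * β) * ‖u‖ ^ 2
          = (c * β / 2 * ‖δ‖ ^ 2 * (2 * c * β) + ‖u‖ ^ 2) / (2 * c * β) from by
            field_simp,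
        le_div_iff₀ h2cβ]
      nlinarith [sq_nonneg (c * β * ‖δ‖ - ‖u‖)]
    linarith
  -- final computation
  have hnorm : ‖(1 / β) • (lamk - lamp)‖ ^ 2 = (1 / β) ^ 2 * ‖u‖ ^ 2 := by
    rw [norm_smul, Real.norm_eq_abs, abs_of_pos (by positivity : (0:ℝ) < 1 / β)]
    have : ‖lamk - lamp‖ = ‖u‖ := by rw [hu, ← norm_neg]; congr 1; abel
    rw [this]; ring
  rw [hnorm]
  have hβne : β ≠ 0 := ne_of_gt hβ
  have hcne : c ≠ 0 := ne_of_gt hc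
  have key : f lamp + h lamp ≤ f lamk + h lamk - α / β * ‖u‖ ^ 2 + L / 2 * ‖u‖ ^ 2
      + c * β / 2 * ‖δ‖ ^ 2 + 1 / (2 * c * β) * ‖u‖ ^ 2 := by
    linarith [hdesc, hopt, hyoung, hgu.le, hgu.ge]
  have hcoef : ((α - 1 / (2 * c)) * β - L / 2 * β ^ 2) * ((1 / β) ^ 2 * ‖u‖ ^ 2)
      = α / β * ‖u‖ ^ 2 - 1 / (2 * c * β) * ‖u‖ ^ 2 - L / 2 * ‖u‖ ^ 2 := by
    field_simp
  linarith [key, hcoef.le, hcoef.ge]
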